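/- Let A ⊆ B be finite k-sparse graphs with predimension δ(X) = k|X| − |E(X)|. Then there exists a k-orientation of B in which A is successor-closed if and only if δ(A) ≤ δ(C) for every C with A ⊆ C ⊆ B. -/

import Mathlib

open scoped Classical

/-- Predimension `δ(B) = k|B| − #edges(B)` of a vertex subset. -/
noncomputable def delta {V : Type*} (k : ℕ) (Ed : Finset (Sym2 V)) (B : Finset V) : ℤ :=
  (k : ℤ) * B.card - (Ed.filter fun e => ∀ x ∈ e, x ∈ B).card

/-- For finite `k`-sparse graphs `A ⊆ B`, there is a `k`-orientation of `B` in which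
`A` is successor-closed iff `δ(A) ≤ δ(C)` for all `A ⊆ C ⊆ B`. -/
theorem succClosed_orientation_iff (k : ℕ) (V : Type*) [Fintype V]
    (Ed : Finset (Sym2 V)) (hEd : ∀ e ∈ Ed, ¬ e.IsDiag)
    (hsparse : ∀ C : Finset V, (Ed.filter fun e => ∀ x ∈ e, x ∈ C).card ≤ k * C.card)
    (A : Finset V) :
    (∃ S : V → V → Prop,
        (∀ a b : V, s(a, b) ∈ Ed ↔ (S a b ∨ S b a)) ∧
        (∀ a b : V, ¬ (S a b ∧ S b a)) ∧
        (∀ a : V, (Finset.univ.filter fun b => S a b).card ≤ k) ∧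
        (∀ a ∈ A, ∀ b : V, S a b → b ∈ A)) ↔
      (∀ C : Finset V, A ⊆ C → delta k Ed A ≤ delta k Ed C) := by
  classical
  constructor
  · rintro ⟨S, hiff, hasym, hdeg, hclosed⟩ C hAC
    set EA := Ed.filter (fun e => ∀ x ∈ e, x ∈ A) with hEAdef
    set EC := Ed.filter (fun e => ∀ x ∈ e, x ∈ C) with hECdef
    have hsub : EA ⊆ EC := by
      intro e he
      rw [hEAdef, Finset.mem_filter] at he
      rw [hECdef, Finset.mem_filter]
      exact ⟨he.1, fun x hx => hAC (he.2 x hx)⟩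
    have hsrc : ∀ e ∈ EC \ EA, ∃ p : V × V, e = s(p.1, p.2) ∧ S p.1 p.2 ∧ p.1 ∈ C \ A := by
      intro e he
      rw [Finset.mem_sdiff, hECdef, hEAdef, Finset.mem_filter, Finset.mem_filter] at he
      obtain ⟨⟨heEd, heC⟩, heA⟩ := he
      have heA' : ¬ ∀ x ∈ e, x ∈ A := fun h => heA ⟨heEd, h⟩
      induction e using Sym2.ind with
      | _ a b =>
        rcases (hiff a b).mp heEd with hS | hS
        · refine ⟨(a, b), rfl, hS, Finset.mem_sdiff.mpr ⟨heC a (by simp), ?_⟩⟩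
          intro haA
          have hbA : b ∈ A := hclosed a haA b hS
          exact heA' (fun x hx => by rcases Sym2.mem_iff.mp hx with rfl | rfl <;> assumption)
        · refine ⟨(b, a), Sym2.eq_swap, hS, Finset.mem_sdiff.mpr ⟨heC b (by simp), ?_⟩⟩
          intro hbA
          have haA : a ∈ A := hclosed b hbA a hS
          exact heA' (fun x hx => by rcases Sym2.mem_iff.mp hx with rfl | rfl <;> assumption)
    have key : (EC \ EA).card ≤ k * (C \ A).card := by
      rcases Finset.eq_empty_or_nonempty (EC \ EA) with h0 | ⟨e0, he0⟩
      · simp [h0]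
      obtain ⟨p0, -⟩ := hsrc e0 he0
      set T : Finset (V × V) := (C \ A).biUnion
        (fun v => (Finset.univ.filter fun b => S v b).image fun b => (v, b)) with hTdef
      have hle : (EC \ EA).card ≤ T.card := by
        apply Finset.card_le_card_of_injOn
          (f := fun e => if h : ∃ p : V × V, e = s(p.1, p.2) ∧ S p.1 p.2 ∧ p.1 ∈ C \ A
            then h.choose else p0)
        · intro e he
          have h := hsrc e he
          dsimp only; rw [dif_pos h]
          obtain ⟨h1, h2, h3⟩ := h.choose_spec
          exact Finset.mem_biUnion.mpr ⟨h.choose.1, h3,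
            Finset.mem_image.mpr ⟨h.choose.2, Finset.mem_filter.mpr ⟨Finset.mem_univ _, h2⟩,
              rfl⟩⟩
        · intro e he e' he' heq
          have h := hsrc e (by simpa using he)
          have h' := hsrc e' (by simpa using he')
          dsimp only at heq
          rw [dif_pos h, dif_pos h'] at heq
          rw [h.choose_spec.1, h'.choose_spec.1, heq]
      have hT : T.card ≤ k * (C \ A).card := by
        calc T.card ≤ ∑ v ∈ C \ A, ((Finset.univ.filter fun b => S v b).image
              fun b => (v, b)).card := Finset.card_biUnion_le
          _ ≤ ∑ _v ∈ C \ A, k :=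
              Finset.sum_le_sum (fun v _ => le_trans Finset.card_image_le (hdeg v))
          _ = k * (C \ A).card := by rw [Finset.sum_const, smul_eq_mul, mul_comm]
      exact le_trans hle hT
    have h1 : (EC \ EA).card + EA.card = EC.card := Finset.card_sdiff_add_card_eq_card hsub
    have h2 : (C \ A).card + A.card = C.card := Finset.card_sdiff_add_card_eq_card hAC
    have hk : (((EC \ EA).card : ℤ)) ≤ (k : ℤ) * ((C \ A).card : ℤ) := by exact_mod_cast key
    have h1' : (((EC \ EA).card : ℤ)) + (EA.card : ℤ) = (EC.card : ℤ) := by exact_mod_cast h1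
    have h2' : (((C \ A).card : ℤ)) + (A.card : ℤ) = (C.card : ℤ) := by exact_mod_cast h2
    have h3 : (k : ℤ) * (C.card : ℤ)
        = (k : ℤ) * ((C \ A).card : ℤ) + (k : ℤ) * (A.card : ℤ) := by rw [← h2']; ring
    have hdA : delta k Ed A = (k : ℤ) * A.card - (EA.card : ℤ) := by
      rw [hEAdef]; simp only [delta]; congr!
    have hdC : delta k Ed C = (k : ℤ) * C.card - (EC.card : ℤ) := by
      rw [hECdef]; simp only [delta]; congr!
    rw [hdA, hdC]
    linarith
  · intro hdelta
    set allowed : Sym2 V → Finset V := fun e =>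
      Finset.univ.filter fun v => v ∈ e ∧ ((∀ x ∈ e, x ∈ A) ∨ v ∉ A) with hallowed
    set t : {e : Sym2 V // e ∈ Ed} → Finset (V × Fin k) :=
      fun e => allowed e.1 ×ˢ Finset.univ with htdef
    have hall : ∀ s : Finset {e : Sym2 V // e ∈ Ed}, s.card ≤ (s.biUnion t).card := by
      intro s
      set T := s.biUnion (fun e => allowed e.1) with hTdef
      have hbi : s.biUnion t = T ×ˢ (Finset.univ : Finset (Fin k)) := by
        ext ⟨v, i⟩
        simp only [Finset.mem_biUnion, Finset.mem_product, Finset.mem_univ, and_true, hTdef,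
          htdef]
      rw [hbi, Finset.card_product, Finset.card_univ, Fintype.card_fin]
      have hsplit : (s.filter fun e => ∀ x ∈ e.1, x ∈ A).card
          + (s.filter fun e => ¬ ∀ x ∈ e.1, x ∈ A).card = s.card :=
        Finset.card_filter_add_card_filter_not _
      set s1 := s.filter (fun e => ∀ x ∈ e.1, x ∈ A) with hs1
      set s2 := s.filter (fun e => ¬ ∀ x ∈ e.1, x ∈ A) with hs2
      have hb1 : s1.card ≤ k * (T ∩ A).card := by
        have himg : s1.image (fun e => e.1) ⊆ Ed.filter (fun e => ∀ x ∈ e, x ∈ T ∩ A) := by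
          intro e he
          rcases Finset.mem_image.mp he with ⟨⟨e', he'Ed⟩, hmem, rfl⟩
          rcases Finset.mem_filter.mp hmem with ⟨hs, hA⟩
          refine Finset.mem_filter.mpr ⟨he'Ed, fun x hx => Finset.mem_inter.mpr ⟨?_, hA x hx⟩⟩
          exact Finset.mem_biUnion.mpr ⟨⟨e', he'Ed⟩, hs,
            Finset.mem_filter.mpr ⟨Finset.mem_univ _, hx, Or.inl hA⟩⟩
        calc s1.card = (s1.image (fun e => e.1)).card :=
              (Finset.card_image_of_injective _ Subtype.val_injective).symm
          _ ≤ (Ed.filter (fun e => ∀ x ∈ e, x ∈ T ∩ A)).card := Finset.card_le_card himg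
          _ ≤ k * (T ∩ A).card := hsparse _
      have hsubF : Ed.filter (fun e => ∀ x ∈ e, x ∈ A)
          ⊆ Ed.filter (fun e => ∀ x ∈ e, x ∈ A ∪ T) := by
        intro e he
        rw [Finset.mem_filter] at he ⊢
        exact ⟨he.1, fun x hx => Finset.mem_union_left _ (he.2 x hx)⟩
      have himg2 : s2.image (fun e => e.1)
          ⊆ (Ed.filter fun e => ∀ x ∈ e, x ∈ A ∪ T) \ (Ed.filter fun e => ∀ x ∈ e, x ∈ A) := by
        intro e he
        rcases Finset.mem_image.mp he with ⟨⟨e', he'Ed⟩, hmem, rfl⟩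
        rcases Finset.mem_filter.mp hmem with ⟨hs, hA⟩
        refine Finset.mem_sdiff.mpr ⟨Finset.mem_filter.mpr ⟨he'Ed, fun x hx => ?_⟩, ?_⟩
        · by_cases hxA : x ∈ A
          · exact Finset.mem_union_left _ hxA
          · refine Finset.mem_union_right _ (Finset.mem_biUnion.mpr ⟨⟨e', he'Ed⟩, hs,
              Finset.mem_filter.mpr ⟨Finset.mem_univ _, hx, Or.inr hxA⟩⟩)
        · intro hcon
          exact hA (Finset.mem_filter.mp hcon).2
      have h2a : s2.card + (Ed.filter fun e => ∀ x ∈ e, x ∈ A).card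
          ≤ (Ed.filter fun e => ∀ x ∈ e, x ∈ A ∪ T).card := by
        have hc := Finset.card_le_card himg2
        rw [Finset.card_sdiff_of_subset hsubF] at hc
        have hc2 := Finset.card_le_card hsubF
        have hc3 : s2.card = (s2.image (fun e => e.1)).card :=
          (Finset.card_image_of_injective _ Subtype.val_injective).symm
        omega
      have hAT := hdelta (A ∪ T) Finset.subset_union_left
      have hdA : delta k Ed A
          = (k : ℤ) * A.card - ((Ed.filter fun e => ∀ x ∈ e, x ∈ A).card : ℤ) := by
        simp only [delta]; congr!
      have hdAT : delta k Ed (A ∪ T)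
          = (k : ℤ) * (A ∪ T).card
            - ((Ed.filter fun e => ∀ x ∈ e, x ∈ A ∪ T).card : ℤ) := by
        simp only [delta]; congr!
      rw [hdA, hdAT] at hAT
      have hun : ((A ∪ T) \ A) = T \ A := Finset.union_sdiff_left A T
      have hcardun : ((A ∪ T) \ A).card + A.card = (A ∪ T).card :=
        Finset.card_sdiff_add_card_eq_card Finset.subset_union_left
      have hb2 : (Ed.filter fun e => ∀ x ∈ e, x ∈ A ∪ T).card
          ≤ (Ed.filter fun e => ∀ x ∈ e, x ∈ A).card + k * (T \ A).card := by
        have hcz : ((A ∪ T).card : ℤ) = (A.card : ℤ) + ((T \ A).card : ℤ) := by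
          rw [← hcardun, hun]; push_cast; ring
        have hz : ((Ed.filter fun e => ∀ x ∈ e, x ∈ A ∪ T).card : ℤ)
            ≤ ((Ed.filter fun e => ∀ x ∈ e, x ∈ A).card : ℤ)
              + (k : ℤ) * ((T \ A).card : ℤ) := by
          have hmul : (k : ℤ) * ((A ∪ T).card : ℤ)
              = (k : ℤ) * (A.card : ℤ) + (k : ℤ) * ((T \ A).card : ℤ) := by rw [hcz]; ring
          linarith
        exact_mod_cast hz
      have hb2' : s2.card ≤ k * (T \ A).card := by
        have h := le_trans h2a hb2
        generalize k * (T \ A).card = m at h ⊢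
        omega
      have hTsplit : (T ∩ A).card + (T \ A).card = T.card := Finset.card_inter_add_card_sdiff T A
      have hfin : k * (T ∩ A).card + k * (T \ A).card = T.card * k := by
        rw [← hTsplit]; ring
      linarith
    obtain ⟨f, finj, hf⟩ := (Finset.all_card_le_biUnion_card_iff_exists_injective t).mp hall
    have hmem : ∀ (e : Sym2 V) (he : e ∈ Ed),
        (f ⟨e, he⟩).1 ∈ e ∧ ((∀ x ∈ e, x ∈ A) ∨ (f ⟨e, he⟩).1 ∉ A) := by
      intro e he
      have h := hf ⟨e, he⟩
      rw [htdef, Finset.mem_product] at h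
      have h1 := h.1
      rw [hallowed, Finset.mem_filter] at h1
      exact h1.2
    refine ⟨fun a b => ∃ h : s(a, b) ∈ Ed, (f ⟨s(a, b), h⟩).1 = a, ?_, ?_, ?_, ?_⟩
    · intro a b
      constructor
      · intro h
        rcases Sym2.mem_iff.mp (hmem _ h).1 with ha | hb
        · exact Or.inl ⟨h, ha⟩
        · refine Or.inr ?_
          have hba : s(b, a) ∈ Ed := by rwa [Sym2.eq_swap]
          have hsub : (⟨s(b, a), hba⟩ : {e : Sym2 V // e ∈ Ed}) = ⟨s(a, b), h⟩ :=
            Subtype.ext Sym2.eq_swap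
          exact ⟨hba, by rw [hsub]; exact hb⟩
      · rintro (⟨h, -⟩ | ⟨h, -⟩)
        · exact h
        · rwa [Sym2.eq_swap]
    · rintro a b ⟨⟨h1, e1⟩, ⟨h2, e2⟩⟩
      have hsub : (⟨s(b, a), h2⟩ : {e : Sym2 V // e ∈ Ed}) = ⟨s(a, b), h1⟩ :=
        Subtype.ext Sym2.eq_swap
      rw [hsub] at e2
      have hab : a = b := e1.symm.trans e2
      exact hEd _ h1 (Sym2.mk_isDiag_iff.mpr hab)
    · intro a
      by_cases hk0 : k = 0
      · subst hk0
        simp only [Nat.le_zero, Finset.card_eq_zero]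
        rw [Finset.eq_empty_iff_forall_notMem]
        intro b hb
        obtain ⟨-, h, -⟩ := Finset.mem_filter.mp hb
        exact (f ⟨s(a, b), h⟩).2.elim0
      · haveI : Nonempty (Fin k) := ⟨⟨0, Nat.pos_of_ne_zero hk0⟩⟩
        refine le_trans (Finset.card_le_card_of_injOn
          (fun b => if h : s(a, b) ∈ Ed then (f ⟨s(a, b), h⟩).2
            else Classical.arbitrary (Fin k))
          (fun b _ => Finset.mem_univ _) ?_) (by simp)
        intro b hb b' hb' heq
        obtain ⟨-, h1, e1⟩ := (@Finset.mem_filter _ _ (fun b => Classical.propDecidable _) _ _).mp (Finset.mem_coe.mp hb)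
        obtain ⟨-, h1', e1'⟩ := (@Finset.mem_filter _ _ (fun b => Classical.propDecidable _) _ _).mp (Finset.mem_coe.mp hb')
        dsimp only at heq
        rw [dif_pos h1, dif_pos h1'] at heq
        have hfe : f ⟨s(a, b), h1⟩ = f ⟨s(a, b'), h1'⟩ := Prod.ext (e1.trans e1'.symm) heq
        exact Sym2.congr_right.mp (congrArg Subtype.val (finj hfe))
    · rintro a ha b ⟨h, heq⟩
      rcases (hmem _ h).2 with hall' | hnot
      · exact hall' b (by simp)
      · rw [heq] at hnot
        exact absurd ha hnot
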